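/- Let Ω be a Polish space and let g: Ω → ℝ be upper semicontinuous with g⁺ ∈ L¹(P) for all P in a set 𝒫 of Borel probability measures satisfying lim_n sup_{P∈𝒫} E_P[g⁺·1_{{g>n}}] = 0. Then the map P ↦ E_P[g] (with values in [−∞, ∞)) is upper semicontinuous on 𝒫 with respect to the weak topology induced by C_b(Ω). -/

import Mathlib

open MeasureTheory Filter Topology Set ENNReal

section Aux

variable {Ω : Type*} [TopologicalSpace Ω] [MeasurableSpace Ω] [OpensMeasurableSpace Ω]

/-- Pointwise step-function upper bound for a nonneg bounded function. -/
lemma step_upper {h : Ω → ℝ} {c a : ℝ} (h0 : ∀ x, 0 ≤ h x) (hc : ∀ x, h x ≤ c)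
    (ha : 0 < a) (x : Ω) :
    ENNReal.ofReal (h x) ≤ ENNReal.ofReal a +
      ∑ k ∈ Finset.range (⌈c / a⌉₊),
        ({y | ((k : ℝ) + 1) * a ≤ h y}).indicator (fun _ => ENNReal.ofReal a) x := by
  set M := ⌈c / a⌉₊
  set j := ⌊h x / a⌋₊ with hj
  have hdiv0 : 0 ≤ h x / a := div_nonneg (h0 x) ha.le
  have hjM : j ≤ M := by
    refine le_trans (Nat.floor_mono ?_) (Nat.floor_le_ceil _)
    gcongr
    exact hc x
  have hxlt : h x < ((j : ℝ) + 1) * a := by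
    have h1 := Nat.lt_floor_add_one (h x / a)
    calc h x = (h x / a) * a := by field_simp
    _ < ((j : ℝ) + 1) * a := mul_lt_mul_of_pos_right h1 ha
  have key : ∀ k, k < j → x ∈ {y | ((k : ℝ) + 1) * a ≤ h y} := by
    intro k hk
    have h1 : ((k : ℝ) + 1) ≤ (j : ℝ) := by exact_mod_cast hk
    have h2 : (j : ℝ) ≤ h x / a := Nat.floor_le hdiv0
    have h3 : ((k : ℝ) + 1) * a ≤ (h x / a) * a :=
      mul_le_mul_of_nonneg_right (h1.trans h2) ha.le
    simpa [div_mul_cancel₀ _ ha.ne'] using h3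
  calc ENNReal.ofReal (h x) ≤ ENNReal.ofReal (((j : ℝ) + 1) * a) :=
        ENNReal.ofReal_le_ofReal hxlt.le
    _ = ENNReal.ofReal a + (j : ℝ≥0∞) * ENNReal.ofReal a := by
        rw [add_mul, one_mul, ENNReal.ofReal_add (by positivity) ha.le,
          ENNReal.ofReal_mul (by positivity), ENNReal.ofReal_natCast, add_comm]
    _ = ENNReal.ofReal a + ∑ k ∈ Finset.range j,
          ({y | ((k : ℝ) + 1) * a ≤ h y}).indicator (fun _ => ENNReal.ofReal a) x := by
        congr 1
        rw [Finset.sum_congr rfl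
          (fun k hk => Set.indicator_of_mem (key k (Finset.mem_range.mp hk)) _),
          Finset.sum_const, nsmul_eq_mul, Finset.card_range]
    _ ≤ _ :=
        add_le_add le_rfl (Finset.sum_le_sum_of_subset (Finset.range_subset_range.mpr hjM))

/-- Pointwise step-function lower bound. -/
lemma step_lower {h : Ω → ℝ} {c a : ℝ} (h0 : ∀ x, 0 ≤ h x)
    (ha : 0 < a) (x : Ω) :
    ∑ k ∈ Finset.range (⌈c / a⌉₊),
        ({y | ((k : ℝ) + 1) * a ≤ h y}).indicator (fun _ => ENNReal.ofReal a) x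
      ≤ ENNReal.ofReal (h x) := by
  set M := ⌈c / a⌉₊
  set j := ⌊h x / a⌋₊ with hj
  have hdiv0 : 0 ≤ h x / a := div_nonneg (h0 x) ha.le
  have key : ∀ k : ℕ, x ∈ {y | ((k : ℝ) + 1) * a ≤ h y} → k < j := by
    intro k hk
    have h1 : ((k : ℝ) + 1) ≤ h x / a := by
      rw [le_div_iff₀ ha]; exact hk
    have h2 : (k + 1 : ℕ) ≤ j := Nat.le_floor (by exact_mod_cast h1)
    omega
  calc ∑ k ∈ Finset.range M,
        ({y | ((k : ℝ) + 1) * a ≤ h y}).indicator (fun _ => ENNReal.ofReal a) x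
      ≤ ∑ k ∈ Finset.range M, (if k < j then ENNReal.ofReal a else 0) := by
        refine Finset.sum_le_sum fun k _ => ?_
        by_cases hx : x ∈ {y | ((k : ℝ) + 1) * a ≤ h y}
        · rw [Set.indicator_of_mem hx, if_pos (key k hx)]
        · simp [Set.indicator_of_notMem hx]
    _ = ((Finset.range M).filter (fun k => k < j)).card • ENNReal.ofReal a := by
        rw [← Finset.sum_filter, Finset.sum_const]
    _ ≤ j • ENNReal.ofReal a := by
        gcongr
        calc ((Finset.range M).filter (fun k => k < j)).card
            ≤ (Finset.range j).card := by
              apply Finset.card_le_card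
              intro k hk
              simp only [Finset.mem_filter, Finset.mem_range] at hk ⊢
              exact hk.2
          _ = j := Finset.card_range j
    _ = ENNReal.ofReal ((j : ℝ) * a) := by
        rw [nsmul_eq_mul, ENNReal.ofReal_mul (by positivity), ENNReal.ofReal_natCast]
    _ ≤ ENNReal.ofReal (h x) := by
        apply ENNReal.ofReal_le_ofReal
        have h2 : (j : ℝ) ≤ h x / a := Nat.floor_le hdiv0
        calc (j:ℝ) * a ≤ (h x / a) * a := mul_le_mul_of_nonneg_right h2 ha.le
          _ = h x := by field_simp

/-- The lintegral of a bounded nonneg usc function is "usc" at `P` in the weak topology. -/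
lemma usc_lintegral_eventually_lt
    [HasOuterApproxClosed Ω]
    {h : Ω → ℝ} (hh : UpperSemicontinuous h) (h0 : ∀ x, 0 ≤ h x) {c : ℝ}
    (hc : ∀ x, h x ≤ c) (P : ProbabilityMeasure Ω) {b : ℝ≥0∞}
    (hb : (∫⁻ x, ENNReal.ofReal (h x) ∂(P : Measure Ω)) < b) :
    ∀ᶠ Q : ProbabilityMeasure Ω in 𝓝 P,
      (∫⁻ x, ENNReal.ofReal (h x) ∂(Q : Measure Ω)) < b := by
  set I : ProbabilityMeasure Ω → ℝ≥0∞ :=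
    fun Q => ∫⁻ x, ENNReal.ofReal (h x) ∂(Q : Measure Ω) with hI
  -- replace b by a finite b'
  have hIP_fin : I P ≤ ENNReal.ofReal c := by
    calc I P ≤ ∫⁻ _, ENNReal.ofReal c ∂(P : Measure Ω) :=
          lintegral_mono fun x => ENNReal.ofReal_le_ofReal (hc x)
      _ = ENNReal.ofReal c := by simp
  set b' := min b (ENNReal.ofReal c + 1) with hb'
  have hb'b : b' ≤ b := min_le_left _ _
  have hb'top : b' ≠ ∞ := by
    refine ne_top_of_le_ne_top ?_ (min_le_right _ _)
    simp [ENNReal.add_ne_top]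
  have hIb' : I P < b' := lt_min hb (lt_of_le_of_lt hIP_fin (ENNReal.lt_add_right (by simp) one_ne_zero))
  suffices H : ∀ᶠ Q : ProbabilityMeasure Ω in 𝓝 P, I Q < b' by
    exact H.mono fun Q hQ => lt_of_lt_of_le hQ hb'b
  -- epsilon
  set ε := (b' - I P) / 3 with hε
  have hIPfin : I P ≠ ∞ := (hIb'.trans hb'top.lt_top).ne
  have hd0 : b' - I P ≠ 0 := by
    simp only [ne_eq, tsub_eq_zero_iff_le, not_le]
    exact hIb'
  have hdtop : b' - I P ≠ ∞ := by
    exact ne_top_of_le_ne_top hb'top tsub_le_self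
  have hε0 : ε ≠ 0 := by
    simp [hε, ENNReal.div_eq_zero_iff, hd0]
  have hεtop : ε ≠ ∞ := by
    simp [hε, ENNReal.div_eq_top, hdtop]
  have hIεε : I P + ε + ε < b' := by
    have h3 : ε + ε + ε = b' - I P := by rw [hε]; exact ENNReal.add_thirds _
    have h2 : ε + ε < b' - I P := by
      rw [← h3]
      exact ENNReal.lt_add_right (by simp [ENNReal.add_ne_top, hεtop]) hε0
    calc I P + ε + ε = I P + (ε + ε) := by rw [add_assoc]
      _ < I P + (b' - I P) := ENNReal.add_lt_add_left hIPfin h2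
      _ = b' := add_tsub_cancel_of_le hIb'.le
  -- the step size
  set a := ε.toReal with ha
  have ha0 : 0 < a := ENNReal.toReal_pos hε0 hεtop
  have hoa : ENNReal.ofReal a = ε := ENNReal.ofReal_toReal hεtop
  set M := ⌈c / a⌉₊ with hM
  set F : ℕ → Set Ω := fun k => {y | ((k : ℝ) + 1) * a ≤ h y} with hF
  have hFclosed : ∀ k, IsClosed (F k) := by
    intro k
    have : F k = {y | h y < ((k : ℝ) + 1) * a}ᶜ := by
      ext y; simp [hF, not_lt]
    rw [this]
    exact (hh.isOpen_preimage _).isClosed_compl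
  have hFmeas : ∀ k, MeasurableSet (F k) := fun k => (hFclosed k).measurableSet
  -- delta
  set δ := ε / ((M : ℝ≥0∞) * ENNReal.ofReal a + 1) with hδ
  have hδ0 : 0 < δ := by
    apply ENNReal.div_pos hε0
    exact ENNReal.add_ne_top.mpr ⟨ENNReal.mul_ne_top (by simp) ENNReal.ofReal_ne_top, one_ne_top⟩
  have hMδ : (M : ℝ≥0∞) * (ENNReal.ofReal a * δ) ≤ ε := by
    rw [← mul_assoc, hδ]
    calc (M : ℝ≥0∞) * ENNReal.ofReal a * (ε / ((M : ℝ≥0∞) * ENNReal.ofReal a + 1))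
        ≤ ((M : ℝ≥0∞) * ENNReal.ofReal a + 1) * (ε / ((M : ℝ≥0∞) * ENNReal.ofReal a + 1)) := by
          gcongr
          exact le_add_right le_rfl
      _ = ε := by
          rw [ENNReal.mul_div_cancel']
          · simp
          · exact fun h => absurd h (ENNReal.add_ne_top.mpr ⟨ENNReal.mul_ne_top (ENNReal.natCast_ne_top _) ENNReal.ofReal_ne_top, one_ne_top⟩)
  -- eventual closeness on closed sets
  have hev : ∀ᶠ Q : ProbabilityMeasure Ω in 𝓝 P,
      ∀ k ∈ Finset.range M, (Q : Measure Ω) (F k) < (P : Measure Ω) (F k) + δ := by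
    rw [eventually_all_finset]
    intro k _
    have hlim : (𝓝 P).limsup (fun Q : ProbabilityMeasure Ω => (Q : Measure Ω) (F k))
        ≤ (P : Measure Ω) (F k) :=
      ProbabilityMeasure.limsup_measure_closed_le_of_tendsto tendsto_id (hFclosed k)
    exact eventually_lt_of_limsup_lt
      (lt_of_le_of_lt hlim (ENNReal.lt_add_right (measure_ne_top _ _) hδ0.ne'))
  refine hev.mono fun Q hQ => ?_
  -- main estimate
  have hstep_up := fun x => step_upper h0 hc ha0 x
  have hstep_lo := fun x => step_lower (c := c) h0 ha0 x
  have hψmeas : ∀ k : ℕ, Measurable ((F k).indicator (fun _ => ENNReal.ofReal a)) :=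
    fun k => measurable_const.indicator (hFmeas k)
  have hIQ : I Q ≤ ENNReal.ofReal a + ∑ k ∈ Finset.range M, ENNReal.ofReal a * (Q : Measure Ω) (F k) := by
    calc I Q ≤ ∫⁻ x, (ENNReal.ofReal a +
          ∑ k ∈ Finset.range M, (F k).indicator (fun _ => ENNReal.ofReal a) x) ∂(Q : Measure Ω) :=
          lintegral_mono hstep_up
      _ = ENNReal.ofReal a + ∑ k ∈ Finset.range M, ENNReal.ofReal a * (Q : Measure Ω) (F k) := by
          rw [lintegral_add_left measurable_const, lintegral_const, measure_univ, mul_one,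
            lintegral_finset_sum _ (fun k _ => hψmeas k)]
          congr 1
          refine Finset.sum_congr rfl fun k _ => ?_
          rw [lintegral_indicator (hFmeas k), setLIntegral_const]
  have hSP : ∑ k ∈ Finset.range M, ENNReal.ofReal a * (P : Measure Ω) (F k) ≤ I P := by
    calc ∑ k ∈ Finset.range M, ENNReal.ofReal a * (P : Measure Ω) (F k)
        = ∫⁻ x, (∑ k ∈ Finset.range M, (F k).indicator (fun _ => ENNReal.ofReal a) x) ∂(P : Measure Ω) := by
          rw [lintegral_finset_sum _ (fun k _ => hψmeas k)]
          refine Finset.sum_congr rfl fun k _ => ?_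
          rw [lintegral_indicator (hFmeas k), setLIntegral_const]
      _ ≤ I P := lintegral_mono hstep_lo
  calc I Q ≤ ENNReal.ofReal a + ∑ k ∈ Finset.range M, ENNReal.ofReal a * (Q : Measure Ω) (F k) := hIQ
    _ ≤ ENNReal.ofReal a + ∑ k ∈ Finset.range M, ENNReal.ofReal a * ((P : Measure Ω) (F k) + δ) := by
        gcongr with k hk
        exact (hQ k hk).le
    _ = ENNReal.ofReal a + (∑ k ∈ Finset.range M, ENNReal.ofReal a * (P : Measure Ω) (F k)
          + (M : ℝ≥0∞) * (ENNReal.ofReal a * δ)) := by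
        congr 1
        simp_rw [mul_add]
        rw [Finset.sum_add_distrib, Finset.sum_const, Finset.card_range, nsmul_eq_mul]
    _ ≤ ENNReal.ofReal a + (I P + (M : ℝ≥0∞) * (ENNReal.ofReal a * δ)) := by
        gcongr
    _ ≤ ENNReal.ofReal a + (I P + ε) := by
        gcongr
    _ = I P + ε + ε := by rw [hoa]; ring
    _ < b' := hIεε

lemma ennreal_toEReal_eq {x : ℝ≥0∞} (hx : x ≠ ⊤) : (x.toEReal) = ((x.toReal : ℝ) : EReal) := by
  conv_lhs => rw [← ENNReal.ofReal_toReal hx]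
  rw [show (ENNReal.ofReal x.toReal).toEReal = ((ENNReal.ofReal x.toReal : ℝ≥0∞) : EReal) from rfl,
    EReal.coe_ennreal_ofReal, max_eq_left ENNReal.toReal_nonneg]

end Aux


theorem stmt_9 {Ω : Type*} [TopologicalSpace Ω] [PolishSpace Ω]
    [MeasurableSpace Ω] [BorelSpace Ω]
    (Ps : Set (ProbabilityMeasure Ω))
    (g : Ω → ℝ) (hg : UpperSemicontinuous g)
    (hgplus : ∀ P ∈ Ps, (∫⁻ ω, ENNReal.ofReal (g ω) ∂(P : Measure Ω)) < ⊤)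
    (hgtail : Tendsto (fun n : ℕ =>
        ⨆ P : Ps, ∫⁻ ω in {ω | (n : ℝ) < g ω},
          ENNReal.ofReal (g ω) ∂((P : ProbabilityMeasure Ω) : Measure Ω))
        atTop (𝓝 0)) :
    UpperSemicontinuousOn (fun P : ProbabilityMeasure Ω =>
      (∫⁻ ω, ENNReal.ofReal (g ω) ∂(P : Measure Ω)).toEReal
        - (∫⁻ ω, ENNReal.ofReal (-(g ω)) ∂(P : Measure Ω)).toEReal) Ps := by
  intro P₀ hP₀ y hy
  simp only at hy ⊢
  set A : ProbabilityMeasure Ω → ℝ≥0∞ :=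
    fun Q => ∫⁻ ω, ENNReal.ofReal (g ω) ∂(Q : Measure Ω) with hA
  set B : ProbabilityMeasure Ω → ℝ≥0∞ :=
    fun Q => ∫⁻ ω, ENNReal.ofReal (-(g ω)) ∂(Q : Measure Ω) with hB
  have mg : Measurable g := hg.measurable
  have mgE : Measurable fun x => ENNReal.ofReal (g x) := ENNReal.measurable_ofReal.comp mg
  have mgE' : Measurable fun x => ENNReal.ofReal (-(g x)) :=
    ENNReal.measurable_ofReal.comp mg.neg
  have hAfin : A P₀ ≠ ∞ := (hgplus P₀ hP₀).ne
  -- pick real thresholds c < c' strictly between the value and y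
  obtain ⟨c, hc1, hc2⟩ := EReal.exists_between_coe_real hy
  obtain ⟨c', hcc', hc'y⟩ := EReal.exists_between_coe_real hc2
  have hcc'R : c < c' := EReal.coe_lt_coe_iff.mp hcc'
  -- pick n with small tail
  have hε₁pos : (0 : ℝ≥0∞) < ENNReal.ofReal (c' - c) := by
    simp [ENNReal.ofReal_pos, sub_pos, hcc'R]
  obtain ⟨n, hTn⟩ := (hgtail.eventually_lt_const hε₁pos).exists
  -- truncated negative parts
  set Bm : ℕ → ProbabilityMeasure Ω → ℝ≥0∞ := fun m Q =>
    ∫⁻ x, min (ENNReal.ofReal (-(g x))) (ENNReal.ofReal (m : ℝ)) ∂(Q : Measure Ω) with hBm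
  have hBmle : ∀ m Q, Bm m Q ≤ ENNReal.ofReal (m : ℝ) := by
    intro m Q
    calc Bm m Q ≤ ∫⁻ _, ENNReal.ofReal (m : ℝ) ∂(Q : Measure Ω) :=
          lintegral_mono fun x => min_le_right _ _
      _ = ENNReal.ofReal (m : ℝ) := by simp
  have hBmfin : ∀ m Q, Bm m Q ≠ ∞ := fun m Q =>
    ne_top_of_le_ne_top ENNReal.ofReal_ne_top (hBmle m Q)
  have hBmmeas : ∀ m : ℕ, Measurable fun x =>
      min (ENNReal.ofReal (-(g x))) (ENNReal.ofReal (m : ℝ)) :=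
    fun m => mgE'.min measurable_const
  have hBsup : ∀ Q, (⨆ m : ℕ, Bm m Q) = B Q := by
    intro Q
    rw [hBm, ← lintegral_iSup (fun m => hBmmeas m)]
    · congr 1
      ext x
      apply le_antisymm
      · exact iSup_le fun m => min_le_left _ _
      · obtain ⟨m, hm⟩ := exists_nat_ge (-(g x))
        exact le_trans (le_min le_rfl (ENNReal.ofReal_le_ofReal hm))
          (le_iSup (fun k : ℕ => min (ENNReal.ofReal (-(g x))) (ENNReal.ofReal (k : ℝ))) m)
    · intro m₁ m₂ hle x
      exact min_le_min le_rfl (ENNReal.ofReal_le_ofReal (by exact_mod_cast hle))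
  -- choose m
  have hmex : ∃ m : ℕ, (A P₀).toReal - (Bm m P₀).toReal < c := by
    by_contra hcon
    push_neg at hcon
    have hb0 : 0 ≤ (A P₀).toReal - c := by
      have := hcon 0
      have h0 : 0 ≤ (Bm 0 P₀).toReal := ENNReal.toReal_nonneg
      linarith
    have hle : ∀ m, Bm m P₀ ≤ ENNReal.ofReal ((A P₀).toReal - c) := by
      intro m
      rw [ENNReal.le_ofReal_iff_toReal_le (hBmfin m P₀) hb0]
      have := hcon m
      linarith
    have hBle : B P₀ ≤ ENNReal.ofReal ((A P₀).toReal - c) := by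
      rw [← hBsup P₀]
      exact iSup_le hle
    have hBfin : B P₀ ≠ ∞ := ne_top_of_le_ne_top ENNReal.ofReal_ne_top hBle
    have hble : (B P₀).toReal ≤ (A P₀).toReal - c :=
      ENNReal.toReal_le_of_le_ofReal hb0 hBle
    have : ((((A P₀).toReal - (B P₀).toReal : ℝ)) : EReal) < (c : EReal) := by
      rw [ennreal_toEReal_eq hAfin, ennreal_toEReal_eq hBfin, ← EReal.coe_sub] at hc1
      exact hc1
    rw [EReal.coe_lt_coe_iff] at this
    linarith
  obtain ⟨m, hm⟩ := hmex
  -- the truncated function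
  set h : Ω → ℝ := fun x => max (min (g x) n) (-(m : ℝ)) + m with hh_def
  have hφc : Continuous (fun r : ℝ => max (min r n) (-(m : ℝ)) + m) := by continuity
  have hφm : Monotone (fun r : ℝ => max (min r n) (-(m : ℝ)) + m) := fun r s hrs =>
    add_le_add (max_le_max (min_le_min hrs le_rfl) le_rfl) le_rfl
  have hh : UpperSemicontinuous h := hφc.comp_upperSemicontinuous hg hφm
  have h0 : ∀ x, 0 ≤ h x := by
    intro x
    have := le_max_right (min (g x) (n:ℝ)) (-(m : ℝ))
    simp only [hh_def]
    linarith
  have hcb : ∀ x, h x ≤ (n : ℝ) + m := by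
    intro x
    have h1 : max (min (g x) (n:ℝ)) (-(m : ℝ)) ≤ (n : ℝ) := by
      apply max_le (min_le_right _ _)
      have : (0:ℝ) ≤ n := by positivity
      have : (0:ℝ) ≤ m := by positivity
      linarith
    simp only [hh_def]
    linarith
  set I : ProbabilityMeasure Ω → ℝ≥0∞ :=
    fun Q => ∫⁻ x, ENNReal.ofReal (h x) ∂(Q : Measure Ω) with hI
  -- I P₀ is small
  have hJpt : ∀ x, ENNReal.ofReal (max (g x) (-(m : ℝ)) + m)
      = ENNReal.ofReal (g x)
        + (ENNReal.ofReal (m : ℝ) - min (ENNReal.ofReal (-(g x))) (ENNReal.ofReal (m : ℝ))) := by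
    intro x
    have m0 : (0:ℝ) ≤ m := Nat.cast_nonneg m
    rcases le_total 0 (g x) with hgx | hgx
    · have h1 : max (g x) (-(m : ℝ)) = g x := max_eq_left (le_trans (neg_nonpos.mpr m0) hgx)
      have h2 : ENNReal.ofReal (-(g x)) = 0 := ENNReal.ofReal_of_nonpos (by linarith)
      rw [h1, h2, ENNReal.ofReal_add hgx m0, min_eq_left zero_le, tsub_zero]
    · have h2 : ENNReal.ofReal (g x) = 0 := ENNReal.ofReal_of_nonpos hgx
      rcases le_total (-(m : ℝ)) (g x) with hgm | hgm
      · have h1 : max (g x) (-(m : ℝ)) = g x := max_eq_left hgm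
        have h3 : min (ENNReal.ofReal (-(g x))) (ENNReal.ofReal (m : ℝ))
            = ENNReal.ofReal (-(g x)) :=
          min_eq_left (ENNReal.ofReal_le_ofReal (by linarith))
        rw [h1, h2, h3, zero_add, ← ENNReal.ofReal_sub _ (by linarith : (0:ℝ) ≤ -(g x))]
        congr 1
        ring
      · have h1 : max (g x) (-(m : ℝ)) = -(m : ℝ) := max_eq_right hgm
        have h3 : min (ENNReal.ofReal (-(g x))) (ENNReal.ofReal (m : ℝ))
            = ENNReal.ofReal (m : ℝ) :=
          min_eq_right (ENNReal.ofReal_le_ofReal (by linarith))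
        rw [h1, h2, h3, zero_add, tsub_self]
        simp
  -- I P₀ is bounded by A P₀ + (m - Bm m P₀)
  have hJ : I P₀ ≤ A P₀ + (ENNReal.ofReal (m : ℝ) - Bm m P₀) := by
    have hpt : ∀ x, ENNReal.ofReal (h x) ≤ ENNReal.ofReal (max (g x) (-(m : ℝ)) + m) := by
      intro x
      apply ENNReal.ofReal_le_ofReal
      simp only [hh_def]
      exact add_le_add (max_le_max (min_le_left _ _) le_rfl) le_rfl
    calc I P₀ ≤ ∫⁻ x, ENNReal.ofReal (max (g x) (-(m : ℝ)) + m) ∂(P₀ : Measure Ω) :=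
          lintegral_mono hpt
      _ = ∫⁻ x, (ENNReal.ofReal (g x)
            + (ENNReal.ofReal (m : ℝ)
                - min (ENNReal.ofReal (-(g x))) (ENNReal.ofReal (m : ℝ)))) ∂(P₀ : Measure Ω) :=
          lintegral_congr hJpt
      _ = A P₀ + ∫⁻ x, (ENNReal.ofReal (m : ℝ)
            - min (ENNReal.ofReal (-(g x))) (ENNReal.ofReal (m : ℝ))) ∂(P₀ : Measure Ω) :=
          lintegral_add_left mgE _
      _ = A P₀ + (ENNReal.ofReal (m : ℝ) - Bm m P₀) := by
          congr 1
          rw [lintegral_sub (hBmmeas m) (hBmfin m P₀)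
            (Eventually.of_forall fun x => min_le_right _ _), lintegral_const, measure_univ,
            mul_one]
  have hsubfin : ENNReal.ofReal (m : ℝ) - Bm m P₀ ≠ ∞ :=
    ne_top_of_le_ne_top ENNReal.ofReal_ne_top tsub_le_self
  have hIlt : I P₀ < ENNReal.ofReal (c + m) := by
    apply lt_of_le_of_lt hJ
    rw [ENNReal.lt_ofReal_iff_toReal_lt (ENNReal.add_ne_top.mpr ⟨hAfin, hsubfin⟩)]
    rw [ENNReal.toReal_add hAfin hsubfin,
      ENNReal.toReal_sub_of_le (hBmle m P₀) ENNReal.ofReal_ne_top,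
      ENNReal.toReal_ofReal (Nat.cast_nonneg m)]
    linarith
  have ev1 := usc_lintegral_eventually_lt hh h0 hcb P₀ hIlt
  -- pointwise key inequality
  have hkey : ∀ x, ENNReal.ofReal (g x) + ENNReal.ofReal (m : ℝ) ≤
      ENNReal.ofReal (h x) + ENNReal.ofReal (-(g x)) +
        ({ω | (n : ℝ) < g ω}).indicator (fun ω => ENNReal.ofReal (g ω)) x := by
    intro x
    have m0 : (0:ℝ) ≤ m := Nat.cast_nonneg m
    have n0 : (0:ℝ) ≤ n := Nat.cast_nonneg n
    rcases lt_or_ge (n : ℝ) (g x) with hx | hx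
    · rw [Set.indicator_of_mem (show x ∈ {ω | (n : ℝ) < g ω} from hx)]
      have hhx : h x = (n : ℝ) + m := by
        simp only [hh_def]
        rw [min_eq_right hx.le, max_eq_left (by linarith)]
      rw [hhx]
      calc ENNReal.ofReal (g x) + ENNReal.ofReal (m : ℝ)
          ≤ ENNReal.ofReal ((n : ℝ) + m) + ENNReal.ofReal (g x) := by
            rw [add_comm]
            exact add_le_add (ENNReal.ofReal_le_ofReal (by linarith)) le_rfl
        _ ≤ _ := add_le_add (self_le_add_right _ _) le_rfl
    · rw [Set.indicator_of_notMem (show x ∉ {ω | (n : ℝ) < g ω} from by simpa using hx), add_zero]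
      rcases le_total (-(m : ℝ)) (g x) with hgm | hgm
      · have hhx : h x = g x + m := by
          simp only [hh_def]
          rw [min_eq_left hx, max_eq_left hgm]
        rw [hhx]
        rcases le_total 0 (g x) with hgx | hgx
        · rw [← ENNReal.ofReal_add hgx m0]
          exact self_le_add_right _ _
        · rw [ENNReal.ofReal_of_nonpos hgx, zero_add]
          calc ENNReal.ofReal (m : ℝ) = ENNReal.ofReal ((g x + m) + (-(g x))) := by
                congr 1
                ring
            _ ≤ ENNReal.ofReal (g x + m) + ENNReal.ofReal (-(g x)) := ENNReal.ofReal_add_le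
      · have hgx : g x ≤ 0 := by linarith
        rw [ENNReal.ofReal_of_nonpos hgx, zero_add]
        calc ENNReal.ofReal (m : ℝ) ≤ ENNReal.ofReal (-(g x)) :=
              ENNReal.ofReal_le_ofReal (by linarith)
          _ ≤ _ := le_add_self
  have hsm : MeasurableSet {ω | (n : ℝ) < g ω} := measurableSet_lt measurable_const mg
  have mh : Measurable fun x => ENNReal.ofReal (h x) :=
    ENNReal.measurable_ofReal.comp (hφc.measurable.comp mg)
  have hkeyQ : ∀ Q : ProbabilityMeasure Ω, A Q + ENNReal.ofReal (m : ℝ) ≤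
      I Q + B Q + ∫⁻ x in {ω | (n : ℝ) < g ω}, ENNReal.ofReal (g x) ∂(Q : Measure Ω) := by
    intro Q
    calc A Q + ENNReal.ofReal (m : ℝ)
        = ∫⁻ x, (ENNReal.ofReal (g x) + ENNReal.ofReal (m : ℝ)) ∂(Q : Measure Ω) := by
          rw [lintegral_add_left mgE, lintegral_const, measure_univ, mul_one]
      _ ≤ ∫⁻ x, (ENNReal.ofReal (h x) + ENNReal.ofReal (-(g x)) +
            ({ω | (n : ℝ) < g ω}).indicator (fun ω => ENNReal.ofReal (g ω)) x) ∂(Q : Measure Ω) :=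
          lintegral_mono hkey
      _ = _ := by
          rw [lintegral_add_left (f := fun x => ENNReal.ofReal (h x) + ENNReal.ofReal (-(g x))) (mh.add mgE'), lintegral_add_left mh,
            lintegral_indicator hsm]
  -- conclude
  have ev2 : ∀ᶠ Q : ProbabilityMeasure Ω in 𝓝[Ps] P₀, Q ∈ Ps := eventually_mem_nhdsWithin
  refine ((ev1.filter_mono nhdsWithin_le_nhds).and ev2).mono ?_
  rintro Q ⟨hQI, hQPs⟩
  show (A Q).toEReal - (B Q).toEReal < y
  have hykey : (⊥ : EReal) < y := lt_of_le_of_lt bot_le hy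
  by_cases hBQ : B Q = ∞
  · rw [hBQ, show ((⊤ : ℝ≥0∞).toEReal) = (⊤ : EReal) from rfl, EReal.sub_top]
    exact hykey
  · have hAQfin : A Q ≠ ∞ := (hgplus Q hQPs).ne
    have hIQfin : I Q ≠ ∞ := hQI.ne_top
    have htailQ : (∫⁻ x in {ω | (n : ℝ) < g ω}, ENNReal.ofReal (g x) ∂(Q : Measure Ω))
        < ENNReal.ofReal (c' - c) :=
      lt_of_le_of_lt (le_iSup (fun P : Ps => ∫⁻ ω in {ω | (n : ℝ) < g ω},
        ENNReal.ofReal (g ω) ∂((P : ProbabilityMeasure Ω) : Measure Ω)) ⟨Q, hQPs⟩) hTn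
    have htfin : (∫⁻ x in {ω | (n : ℝ) < g ω}, ENNReal.ofReal (g x) ∂(Q : Measure Ω)) ≠ ∞ :=
      htailQ.ne_top
    have hfinR : I Q + B Q + (∫⁻ x in {ω | (n : ℝ) < g ω}, ENNReal.ofReal (g x) ∂(Q : Measure Ω))
        ≠ ∞ := by
      simp [ENNReal.add_ne_top, hIQfin, hBQ, htfin]
    have h1 := ENNReal.toReal_mono hfinR (hkeyQ Q)
    rw [ENNReal.toReal_add hAQfin ENNReal.ofReal_ne_top,
      ENNReal.toReal_ofReal (Nat.cast_nonneg m),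
      ENNReal.toReal_add (ENNReal.add_ne_top.mpr ⟨hIQfin, hBQ⟩) htfin,
      ENNReal.toReal_add hIQfin hBQ] at h1
    have hiq : (I Q).toReal < c + m := by
      have := hQI
      rwa [ENNReal.lt_ofReal_iff_toReal_lt hIQfin] at this
    have htq : (∫⁻ x in {ω | (n : ℝ) < g ω}, ENNReal.ofReal (g x) ∂(Q : Measure Ω)).toReal
        < c' - c := by
      have := htailQ
      rwa [ENNReal.lt_ofReal_iff_toReal_lt htfin] at this
    rw [ennreal_toEReal_eq hAQfin, ennreal_toEReal_eq hBQ, ← EReal.coe_sub]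
    refine lt_trans ?_ hc'y
    rw [EReal.coe_lt_coe_iff]
    linarith
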